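/- arXiv:2105.08513 — 3 statements merged into one kernel-verified Lean document; each statement's English description precedes it below -/
import Mathlib

section
/- The function u(x) = (λ√(n(n-2))/(λ² + |x - x₀|²))^((n-2)/2) satisfies Δu + u^((n+2)/(n-2)) = 0 and u > 0 on ℝⁿ, for every λ > 0, x₀ ∈ ℝⁿ, and n ≥ 3. -/
open EuclideanSpace

noncomputable def laplacian {n : ℕ} (u : EuclideanSpace ℝ (Fin n) → ℝ)
    (x : EuclideanSpace ℝ (Fin n)) : ℝ :=
  ∑ i, fderiv ℝ (fun y => fderiv ℝ u y (EuclideanSpace.single i 1)) x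
    (EuclideanSpace.single i 1)

lemma aux_deriv (A q lam : ℝ) (hlam : 0 < lam) (t : ℝ) (ht : 0 ≤ t) :
    HasDerivAt (fun s : ℝ => A * (lam ^ 2 + s) ^ q) (A * q * (lam ^ 2 + t) ^ (q - 1)) t := by
  have hs : (0:ℝ) < lam ^ 2 + t := by positivity
  have h1 : HasDerivAt (fun s : ℝ => lam ^ 2 + s) 1 t := by
    simpa using (hasDerivAt_id t).const_add (lam ^ 2)
  have h2 := (Real.hasDerivAt_rpow_const (x := lam ^ 2 + t) (p := q) (Or.inl hs.ne')).comp t h1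
  have h3 := h2.const_mul A
  simpa [Function.comp, mul_comm, mul_assoc, mul_left_comm] using h3

lemma aux_fderiv {n : ℕ} (A q lam : ℝ) (hlam : 0 < lam) (x₀ x : EuclideanSpace ℝ (Fin n)) :
    HasFDerivAt (fun y : EuclideanSpace ℝ (Fin n) => A * (lam ^ 2 + ‖y - x₀‖ ^ 2) ^ q)
      ((A * q * (lam ^ 2 + ‖x - x₀‖ ^ 2) ^ (q - 1)) • ((2:ℝ) • innerSL ℝ (x - x₀))) x := by
  have hg : HasFDerivAt (fun y : EuclideanSpace ℝ (Fin n) => ‖y - x₀‖ ^ 2)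
      ((2:ℝ) • innerSL ℝ (x - x₀)) x := by
    have h := ((hasFDerivAt_id x).sub_const x₀).norm_sq
    refine h.congr_fderiv ?_
    ext v
    simp [two_smul]
  exact (aux_deriv A q lam hlam _ (by positivity)).comp_hasFDerivAt x hg

lemma final_algebra (n : ℕ) (hn : 3 ≤ n) (lam t p c : ℝ) (hlam : 0 < lam) (ht : 0 ≤ t)
    (hp : p = ((n:ℝ) - 2) / 2) (hc : c = lam * Real.sqrt ((n:ℝ) * ((n:ℝ) - 2))) :
    (n:ℝ) * (c ^ p * -p * (lam ^ 2 + t) ^ (-p - 1) * 2)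
      + c ^ p * -p * (-p - 1) * (lam ^ 2 + t) ^ (-p - 1 - 1) * 4 * t
      + ((c / (lam ^ 2 + t)) ^ p) ^ (((n:ℝ) + 2) / ((n:ℝ) - 2)) = 0 := by
  have hn3 : (3:ℝ) ≤ (n:ℝ) := by exact_mod_cast hn
  have h2 : (0:ℝ) < (n:ℝ) - 2 := by linarith
  have hK : (0:ℝ) < (n:ℝ) * ((n:ℝ) - 2) := mul_pos (by linarith) h2
  have hc0 : 0 < c := hc ▸ mul_pos hlam (Real.sqrt_pos.mpr hK)
  have hs : (0:ℝ) < lam ^ 2 + t := by positivity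
  have hcsq : c ^ 2 = lam ^ 2 * ((n:ℝ) * ((n:ℝ) - 2)) := by
    rw [hc, mul_pow, Real.sq_sqrt hK.le]
  have hmulexp : p * (((n:ℝ) + 2) / ((n:ℝ) - 2)) = p + 2 := by
    rw [hp]; field_simp; ring
  have hupow : ((c / (lam ^ 2 + t)) ^ p) ^ (((n:ℝ) + 2) / ((n:ℝ) - 2))
      = c ^ p * c ^ 2 * (lam ^ 2 + t) ^ (-p - 1 - 1) := by
    rw [← Real.rpow_mul (div_nonneg hc0.le hs.le), hmulexp,
      Real.div_rpow hc0.le hs.le, div_eq_mul_inv, ← Real.rpow_neg hs.le,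
      Real.rpow_add hc0 p 2, Real.rpow_two,
      show (-(p + 2) : ℝ) = -p - 1 - 1 by ring]
  have hs1 : (lam ^ 2 + t) ^ (-p - 1) = (lam ^ 2 + t) ^ (-p - 1 - 1) * (lam ^ 2 + t) := by
    rw [← Real.rpow_add_one hs.ne' (-p - 1 - 1)]
    norm_num
  rw [hupow, hcsq, hs1, hp]
  ring

/-- the standard bubble solves `Δu + u^((n+2)/(n-2)) = 0` and is positive. -/
theorem bubble_solves (n : ℕ) (hn : 3 ≤ n) (lam : ℝ) (hlam : 0 < lam)
    (x₀ : EuclideanSpace ℝ (Fin n))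
    (u : EuclideanSpace ℝ (Fin n) → ℝ)
    (hu : ∀ x, u x =
      (lam * Real.sqrt ((n : ℝ) * ((n : ℝ) - 2)) / (lam ^ 2 + ‖x - x₀‖ ^ 2))
        ^ (((n : ℝ) - 2) / 2)) :
    ∀ x, laplacian u x + u x ^ (((n : ℝ) + 2) / ((n : ℝ) - 2)) = 0 ∧ 0 < u x := by
  have hn3 : (3:ℝ) ≤ (n:ℝ) := by exact_mod_cast hn
  have hK : (0:ℝ) < (n:ℝ) * ((n:ℝ) - 2) := mul_pos (by linarith) (by linarith)
  set p : ℝ := ((n:ℝ) - 2) / 2 with hp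
  set c : ℝ := lam * Real.sqrt ((n:ℝ) * ((n:ℝ) - 2)) with hcdef
  have hc0 : 0 < c := mul_pos hlam (Real.sqrt_pos.mpr hK)
  have hs0 : ∀ y : EuclideanSpace ℝ (Fin n), (0:ℝ) < lam ^ 2 + ‖y - x₀‖ ^ 2 := fun y => by
    positivity
  have hpos : ∀ x, 0 < u x := fun x => by
    rw [hu x]; exact Real.rpow_pos_of_pos (div_pos hc0 (hs0 x)) _
  have hufun : u = fun y => c ^ p * (lam ^ 2 + ‖y - x₀‖ ^ 2) ^ (-p) := by
    funext y
    rw [hu y, Real.div_rpow hc0.le (hs0 y).le, Real.rpow_neg (hs0 y).le, div_eq_mul_inv]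
  have hD1 : ∀ y, HasFDerivAt u
      ((c ^ p * -p * (lam ^ 2 + ‖y - x₀‖ ^ 2) ^ (-p - 1)) • ((2:ℝ) • innerSL ℝ (y - x₀))) y := by
    intro y
    rw [hufun]
    exact aux_fderiv (c ^ p) (-p) lam hlam x₀ y
  have hfd : ∀ y, fderiv ℝ u y
      = (c ^ p * -p * (lam ^ 2 + ‖y - x₀‖ ^ 2) ^ (-p - 1)) • ((2:ℝ) • innerSL ℝ (y - x₀)) :=
    fun y => (hD1 y).fderiv
  intro x
  refine ⟨?_, hpos x⟩
  have key : ∀ i : Fin n,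
      fderiv ℝ (fun y => fderiv ℝ u y (EuclideanSpace.single i 1)) x (EuclideanSpace.single i 1)
      = c ^ p * -p * (lam ^ 2 + ‖x - x₀‖ ^ 2) ^ (-p - 1) * 2
        + (c ^ p * -p * (-p - 1) * (lam ^ 2 + ‖x - x₀‖ ^ 2) ^ (-p - 1 - 1) * 4)
            * ((x - x₀) i) ^ 2 := by
    intro i
    set e : EuclideanSpace ℝ (Fin n) := EuclideanSpace.single i 1 with he
    have hfe : (fun y => fderiv ℝ u y e)
        = fun y => (c ^ p * -p * (lam ^ 2 + ‖y - x₀‖ ^ 2) ^ (-p - 1))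
            * (2 * ((innerSL ℝ e) y - (innerSL ℝ e) x₀)) := by
      funext y
      rw [hfd y]
      simp only [ContinuousLinearMap.smul_apply, smul_eq_mul, innerSL_apply_apply]
      rw [inner_sub_left, real_inner_comm y e, real_inner_comm x₀ e]
    have hB : HasFDerivAt
        (fun y : EuclideanSpace ℝ (Fin n) => 2 * ((innerSL ℝ e) y - (innerSL ℝ e) x₀))
        ((2:ℝ) • innerSL ℝ e) x :=
      (((innerSL ℝ e).hasFDerivAt).sub_const ((innerSL ℝ e) x₀)).const_mul 2
    have hC := aux_fderiv (c ^ p * -p) (-p - 1) lam hlam x₀ x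
    have hprod := hC.mul hB
    rw [hfe]; erw [hprod.fderiv]
    have h1 : (innerSL ℝ e) e = 1 := by
      simp [he, EuclideanSpace.inner_single_left, EuclideanSpace.single_apply]
    have h2 : inner ℝ (x - x₀) e = (x - x₀) i := by
      simp [he, EuclideanSpace.inner_single_right]
    have h3 : (inner ℝ e x : ℝ) - inner ℝ e x₀ = (x - x₀) i := by
      rw [← inner_sub_right]
      simp [he, EuclideanSpace.inner_single_left]
    simp only [ContinuousLinearMap.add_apply, ContinuousLinearMap.smul_apply, smul_eq_mul,
      innerSL_apply_apply, h1, h2]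
    rw [h3]
    ring
  have hsum : ∑ i, ((x - x₀) i) ^ 2 = ‖x - x₀‖ ^ 2 := by
    rw [PiLp.norm_sq_eq_of_L2]
    simp [Real.norm_eq_abs, sq_abs]
  have hlap : laplacian u x
      = (n:ℝ) * (c ^ p * -p * (lam ^ 2 + ‖x - x₀‖ ^ 2) ^ (-p - 1) * 2)
        + c ^ p * -p * (-p - 1) * (lam ^ 2 + ‖x - x₀‖ ^ 2) ^ (-p - 1 - 1) * 4
            * ‖x - x₀‖ ^ 2 := by
    unfold laplacian
    rw [Finset.sum_congr rfl fun i _ => key i, Finset.sum_add_distrib, Finset.sum_const,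
      Finset.card_univ, Fintype.card_fin, ← Finset.mul_sum, hsum]
    push_cast [nsmul_eq_mul]
    ring
  rw [hlap, hu x]
  exact final_algebra n hn lam (‖x - x₀‖ ^ 2) p c hlam (by positivity) hp hcdef
end

section
/- If a homogeneous polynomial p on ℝⁿ is hyperbolic with respect to a direction a ∈ ℝⁿ, then the directional derivative q(λ) = Σⱼ aⱼ ∂p/∂λⱼ(λ) is also hyperbolic with respect to a. -/
open MvPolynomial

/-- The univariate polynomial `t ↦ p(x + t a)` obtained from a multivariate
polynomial `p` by restricting to the line through `x` in direction `a`. -/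
noncomputable def linePoly {n : ℕ} (p : MvPolynomial (Fin n) ℝ) (a x : Fin n → ℝ) :
    Polynomial ℝ :=
  MvPolynomial.aeval (fun i => Polynomial.C (x i) + Polynomial.X * Polynomial.C (a i)) p

/-- `p` is hyperbolic of degree `m` with respect to the direction `a`. -/
def Hyperbolic {n : ℕ} (p : MvPolynomial (Fin n) ℝ) (a : Fin n → ℝ) (m : ℕ) : Prop :=
  p.IsHomogeneous m ∧ MvPolynomial.eval a p ≠ 0 ∧
    ∀ x : Fin n → ℝ, (linePoly p a x).roots.card = m

lemma linePoly_derivative {n : ℕ} (p : MvPolynomial (Fin n) ℝ) (a x : Fin n → ℝ) :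
    (linePoly p a x).derivative = linePoly (∑ j, a j • MvPolynomial.pderiv j p) a x := by
  induction p using MvPolynomial.induction_on with
  | C r => simp [linePoly]
  | add p q hp hq =>
      simp only [linePoly, map_add, Polynomial.derivative_add, map_sum, smul_add] at *
      rw [hp, hq]
      rw [← Finset.sum_add_distrib]
  | mul_X p i hp =>
      have key : (∑ j, a j • MvPolynomial.pderiv j (p * X i)) =
          (∑ j, a j • MvPolynomial.pderiv j p) * X i + a i • p := by
        classical
        simp only [pderiv_mul, smul_add, Finset.sum_add_distrib, pderiv_X, Pi.single_apply]
        congr 1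
        · rw [Finset.sum_mul]
          exact Finset.sum_congr rfl fun j _ => (smul_mul_assoc _ _ _).symm
        · rw [Finset.sum_eq_single i]
          · rw [if_pos rfl, mul_one]
          · intro b _ hb
            rw [if_neg fun h => hb h.symm, mul_zero, smul_zero]
          · intro h
            exact absurd (Finset.mem_univ i) h
      rw [key]
      simp only [linePoly, map_add, map_mul, map_smul, aeval_X] at *
      rw [Polynomial.derivative_mul, hp]
      simp [smul_eq_mul, Polynomial.smul_eq_C_mul]
      ring

lemma eval_linePoly {n : ℕ} (p : MvPolynomial (Fin n) ℝ) (a x : Fin n → ℝ) (t : ℝ) :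
    (linePoly p a x).eval t = MvPolynomial.eval (fun i => x i + t * a i) p := by
  induction p using MvPolynomial.induction_on with
  | C r => simp [linePoly]
  | add p q hp hq => simp_all [linePoly]
  | mul_X p i hp => simp_all [linePoly]; exact Or.inl (mul_comm _ _)

lemma eval_smul_homog {n m : ℕ} {p : MvPolynomial (Fin n) ℝ} (hp : p.IsHomogeneous m)
    (a : Fin n → ℝ) (t : ℝ) :
    MvPolynomial.eval (fun i => t * a i) p = t ^ m * MvPolynomial.eval a p := by
  rw [MvPolynomial.eval_eq', MvPolynomial.eval_eq', Finset.mul_sum]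
  apply Finset.sum_congr rfl
  intro d hd
  have hdm : d.degree = m := by
    rw [Finsupp.degree_eq_weight_one]
    exact hp (MvPolynomial.mem_support_iff.mp hd)
  have hsum : ∑ i, d i = m := by
    rw [← hdm, Finsupp.degree]
    exact (Finset.sum_subset (Finset.subset_univ _)
      (fun i _ hi => Finsupp.notMem_support_iff.mp hi)).symm
  have : ∏ i, (t * a i) ^ d i = t ^ m * ∏ i, (a i) ^ d i := by
    simp only [mul_pow, Finset.prod_mul_distrib, Finset.prod_pow_eq_pow_sum]
    rw [hsum]
  rw [this]; ring

lemma pderiv_isHomogeneous {n m : ℕ} {p : MvPolynomial (Fin n) ℝ} (hp : p.IsHomogeneous m)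
    (j : Fin n) : (MvPolynomial.pderiv j p).IsHomogeneous (m - 1) := by
  classical
  rw [← p.support_sum_monomial_coeff, map_sum]
  apply MvPolynomial.IsHomogeneous.sum
  intro d hd
  rw [MvPolynomial.pderiv_monomial]
  by_cases h : d j = 0
  · simp [h, MvPolynomial.isHomogeneous_zero]
  · apply MvPolynomial.isHomogeneous_monomial
    have hdm : d.degree = m := by
      rw [Finsupp.degree_eq_weight_one]
      exact hp (MvPolynomial.mem_support_iff.mp hd)
    have degree_eq : ∀ e : Fin n →₀ ℕ, e.degree = ∑ i, e i := fun e =>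
      Finset.sum_subset (Finset.subset_univ _)
        (fun i _ hi => Finsupp.notMem_support_iff.mp hi)
    rw [degree_eq (d - Finsupp.single j 1), ← hdm, degree_eq d]
    have hle : ∀ i ∈ Finset.univ, (Finsupp.single j 1 : Fin n →₀ ℕ) i ≤ d i := by
      intro i _
      rcases eq_or_ne i j with rfl | hij
      · simp [Finsupp.single_apply]; omega
      · rw [Finsupp.single_apply, if_neg fun h => hij h.symm]
        exact Nat.zero_le _
    have hsingle : ∑ i, (Finsupp.single j 1 : Fin n →₀ ℕ) i = 1 := by
      simp [Finsupp.single_apply]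
    simp only [Finsupp.coe_tsub, Pi.sub_apply]
    rw [Finset.sum_tsub_distrib _ hle, hsingle]

/-- if `p` is hyperbolic with respect to `a`, then
`q = Σⱼ aⱼ ∂ⱼ p` is hyperbolic (of degree `m - 1`) with respect to `a`. -/
theorem directional_derivative_hyperbolic (n m : ℕ) (hm : 1 ≤ m)
    (p : MvPolynomial (Fin n) ℝ) (a : Fin n → ℝ)
    (hp : Hyperbolic p a m) :
    Hyperbolic (∑ j, a j • MvPolynomial.pderiv j p) a (m - 1) := by
  obtain ⟨hhom, hne, hroots⟩ := hp
  set q := ∑ j, a j • MvPolynomial.pderiv j p with hq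
  have hqhom : q.IsHomogeneous (m - 1) := by
    apply MvPolynomial.IsHomogeneous.sum
    intro j _
    rw [MvPolynomial.smul_eq_C_mul]
    exact (pderiv_isHomogeneous hhom j).C_mul _
  -- the line polynomial through 0 of p is C (p a) * X ^ m
  have hline0 : linePoly p a 0 = Polynomial.C (MvPolynomial.eval a p) * Polynomial.X ^ m := by
    apply Polynomial.funext
    intro t
    rw [eval_linePoly]
    simp only [Pi.zero_apply, zero_add]
    rw [eval_smul_homog hhom a t, Polynomial.eval_mul, Polynomial.eval_C,
      Polynomial.eval_pow, Polynomial.eval_X]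
    ring
  have hqa : MvPolynomial.eval a q = m * MvPolynomial.eval a p := by
    have h1 : MvPolynomial.eval a q = (linePoly q a 0).eval 1 := by
      rw [eval_linePoly]; simp
    rw [h1, ← linePoly_derivative, hline0]
    simp [Polynomial.derivative_C_mul]
    rw [Polynomial.derivative_X_pow, Polynomial.eval_mul, Polynomial.eval_C, Polynomial.eval_pow,
      Polynomial.eval_X, one_pow]
    ring
  refine ⟨hqhom, ?_, ?_⟩
  · rw [hqa]
    have : (m : ℝ) ≠ 0 := by positivity
    exact mul_ne_zero this hne
  · intro x
    have hder : linePoly q a x = (linePoly p a x).derivative :=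
      (linePoly_derivative p a x).symm
    set f := linePoly p a x with hf
    have hfne : f ≠ 0 := by
      intro h0
      have h := hroots x
      rw [← hf, h0, Polynomial.roots_zero] at h
      simp at h
      omega
    have hdegle : f.natDegree ≤ m := by
      have hb : ∀ i, (Polynomial.C (x i) + Polynomial.X * Polynomial.C (a i)).natDegree ≤ 1 := by
        intro i
        refine (Polynomial.natDegree_add_le _ _).trans ?_
        simp only [Polynomial.natDegree_C, max_le_iff]
        exact ⟨Nat.zero_le _, Polynomial.natDegree_mul_le.trans (by simp)⟩
      have h2 := MvPolynomial.aeval_natDegree_le (n := 1) p hhom.totalDegree_le _ hb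
      rw [mul_one] at h2
      exact h2
    have hdegge : m ≤ f.natDegree := by
      have h1 : f.roots.card ≤ f.natDegree := by
        have := Polynomial.card_roots' f
        exact this
      rw [hroots x] at h1
      exact h1
    have hle : (linePoly q a x).roots.card ≤ m - 1 := by
      rw [hder]
      calc f.derivative.roots.card ≤ f.derivative.natDegree := Polynomial.card_roots' _
        _ ≤ f.natDegree - 1 := Polynomial.natDegree_derivative_le f
        _ ≤ m - 1 := by omega
    have hge : m - 1 ≤ (linePoly q a x).roots.card := by
      rw [hder]
      have := Polynomial.card_roots_le_derivative f
      rw [hroots x] at this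
      omega
    omega
end

section
/- On the positive orthant in ℝⁿ, for k > l, the partial derivatives of σₖ(λ)/σₗ(λ) with respect to each λᵢ are positive; in particular the quotient σₖ/σₗ is strictly increasing in each variable on Γₙ⁺. -/
lemma msum_pos (s : Multiset ℝ) (h : ∀ x ∈ s, 0 < x) (hne : s ≠ 0) : 0 < s.sum := by
  induction s using Multiset.induction_on with
  | empty => exact absurd rfl hne
  | cons a t ih =>
    rcases eq_or_ne t 0 with rfl | ht
    · simpa using h a (Multiset.mem_cons_self a 0)
    · rw [Multiset.sum_cons]
      exact add_pos (h a (Multiset.mem_cons_self a t))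
        (ih (fun x hx => h x (Multiset.mem_cons_of_mem hx)) ht)

lemma msum_nonneg (s : Multiset ℝ) (h : ∀ x ∈ s, 0 ≤ x) : 0 ≤ s.sum := by
  induction s using Multiset.induction_on with
  | empty => simp
  | cons a t ih =>
    rw [Multiset.sum_cons]
    exact add_nonneg (h a (Multiset.mem_cons_self a t))
      (ih (fun x hx => h x (Multiset.mem_cons_of_mem hx)))

lemma mprod_pos (s : Multiset ℝ) (h : ∀ x ∈ s, 0 < x) : 0 < s.prod := by
  induction s using Multiset.induction_on with
  | empty => simp
  | cons a t ih =>
    rw [Multiset.prod_cons]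
    exact mul_pos (h a (Multiset.mem_cons_self a t))
      (ih (fun x hx => h x (Multiset.mem_cons_of_mem hx)))

lemma mprod_nonneg (s : Multiset ℝ) (h : ∀ x ∈ s, 0 ≤ x) : 0 ≤ s.prod := by
  induction s using Multiset.induction_on with
  | empty => simp
  | cons a t ih =>
    rw [Multiset.prod_cons]
    exact mul_nonneg (h a (Multiset.mem_cons_self a t))
      (ih (fun x hx => h x (Multiset.mem_cons_of_mem hx)))

lemma myEsymm_cons (x : ℝ) (s : Multiset ℝ) (j : ℕ) :
    (x ::ₘ s).esymm (j + 1) = s.esymm (j + 1) + x * s.esymm j := by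
  rw [Multiset.esymm, Multiset.powersetCard_cons, Multiset.map_add, Multiset.sum_add,
    Multiset.map_map]
  congr 1
  rw [Multiset.esymm, ← Multiset.sum_map_mul_left]
  apply congrArg
  apply Multiset.map_congr rfl
  intro t _
  simp [Multiset.prod_cons]

lemma myEsymm_zero (s : Multiset ℝ) : s.esymm 0 = 1 := by
  simp [Multiset.esymm, Multiset.powersetCard_zero_left]

lemma myEsymm_nonneg (s : Multiset ℝ) (hs : ∀ x ∈ s, 0 ≤ x) (j : ℕ) : 0 ≤ s.esymm j := by
  apply msum_nonneg
  intro a ha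
  rw [Multiset.mem_map] at ha
  obtain ⟨t, ht, rfl⟩ := ha
  exact mprod_nonneg t fun x hx =>
    hs x (Multiset.mem_of_le (Multiset.mem_powersetCard.mp ht).1 hx)

lemma myEsymm_pos (s : Multiset ℝ) (hs : ∀ x ∈ s, 0 < x) {j : ℕ} (hj : j ≤ Multiset.card s) :
    0 < s.esymm j := by
  apply msum_pos
  · intro a ha
    rw [Multiset.mem_map] at ha
    obtain ⟨t, ht, rfl⟩ := ha
    exact mprod_pos t fun x hx =>
      hs x (Multiset.mem_of_le (Multiset.mem_powersetCard.mp ht).1 hx)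
  · rw [Ne, Multiset.map_eq_zero, ← Multiset.card_eq_zero, Multiset.card_powersetCard]
    exact (Nat.choose_pos hj).ne'



lemma newton_aux : ∀ (s : Multiset ℝ), (∀ x ∈ s, 0 < x) → ∀ a c : ℕ, c ≤ a →
    (s.esymm (a + 1) * s.esymm c ≤ s.esymm a * s.esymm (c + 1)) ∧
    (c < a → a ≤ Multiset.card s →
      s.esymm (a + 1) * s.esymm c < s.esymm a * s.esymm (c + 1)) := by
  intro s
  induction s using Multiset.induction_on with
  | empty =>
    intro _ a c _
    have h0 : ∀ j : ℕ, Multiset.esymm (0 : Multiset ℝ) (j + 1) = 0 := by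
      intro j; simp [Multiset.esymm, Multiset.powersetCard_zero_right]
    refine ⟨by rw [h0 a, h0 c, zero_mul, mul_zero], fun h1 h2 => ?_⟩
    simp only [Multiset.card_zero, Nat.le_zero] at h2
    omega
  | cons x s ih =>
    intro hpos a c hca
    have hx : 0 < x := hpos x (Multiset.mem_cons_self x s)
    have hs : ∀ y ∈ s, 0 < y := fun y hy => hpos y (Multiset.mem_cons_of_mem hy)
    have ihs := ih hs
    have hnn : ∀ j, 0 ≤ s.esymm j := fun j => myEsymm_nonneg s (fun y hy => (hs y hy).le) j
    rcases eq_or_lt_of_le hca with rfl | hlt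
    · exact ⟨le_of_eq (mul_comm _ _), fun h => absurd h (lt_irrefl c)⟩
    obtain ⟨α, rfl⟩ : ∃ α, a = α + 1 := ⟨a - 1, by omega⟩
    have hcard : Multiset.card (x ::ₘ s) = Multiset.card s + 1 := Multiset.card_cons x s
    cases c with
    | zero =>
      have e0 : (x ::ₘ s).esymm 0 = 1 := myEsymm_zero _
      have es0 : s.esymm 0 = 1 := myEsymm_zero _
      rw [e0, myEsymm_cons, myEsymm_cons, myEsymm_cons, es0]
      have h1 := (ihs (α + 1) 0 (Nat.zero_le _)).1
      rw [es0, mul_one] at h1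
      constructor
      · nlinarith [mul_nonneg (mul_nonneg hx.le hx.le) (hnn α),
          mul_nonneg hx.le (mul_nonneg (hnn α) (hnn 1))]
      · intro _ h2
        rw [hcard] at h2
        have hEα : 0 < s.esymm α := myEsymm_pos s hs (by omega)
        nlinarith [mul_pos (mul_pos hx hx) hEα,
          mul_nonneg hx.le (mul_nonneg (hnn α) (hnn 1))]
    | succ γ =>
      rw [myEsymm_cons, myEsymm_cons, myEsymm_cons, myEsymm_cons]
      have h1 := (ihs (α + 1) (γ + 1) (by omega)).1
      have h2 := (ihs α (γ + 1) (by omega)).1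
      have h3 := (ihs (α + 1) γ (by omega)).1
      have h4 := (ihs α γ (by omega)).1
      constructor
      · nlinarith [mul_le_mul_of_nonneg_left h2 hx.le,
          mul_le_mul_of_nonneg_left h3 hx.le,
          mul_le_mul_of_nonneg_left h4 (mul_pos hx hx).le]
      · intro _ hc2
        rw [hcard] at hc2
        have h4s := (ihs α γ (by omega)).2 (by omega) (by omega)
        nlinarith [mul_le_mul_of_nonneg_left h2 hx.le,
          mul_le_mul_of_nonneg_left h3 hx.le,
          mul_lt_mul_of_pos_left h4s (mul_pos hx hx)]



/-- The `j`-th elementary symmetric polynomial of `λ₁,…,λₙ` (with `σ₀ = 1`). -/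
def esymm (n j : ℕ) (lam : Fin n → ℝ) : ℝ :=
  ∑ s ∈ Finset.univ.powersetCard j, ∏ i ∈ s, lam i

lemma esymm_eq_multiset (n j : ℕ) (f : Fin n → ℝ) :
    esymm n j f = (Finset.univ.val.map f).esymm j := by
  rw [esymm]
  exact (Finset.esymm_map_val f Finset.univ j).symm

lemma update_map (n : ℕ) (lam : Fin n → ℝ) (i : Fin n) (t : ℝ) :
    Finset.univ.val.map (Function.update lam i t)
      = t ::ₘ (Finset.univ.erase i).val.map lam := by
  have h : (Finset.univ : Finset (Fin n)).val = i ::ₘ (Finset.univ.erase i).val := by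
    rw [Finset.erase_val]
    exact (Multiset.cons_erase (Finset.mem_val.mpr (Finset.mem_univ i))).symm
  rw [h, Multiset.map_cons, Function.update_self]
  congr 1
  apply Multiset.map_congr rfl
  intro x hx
  exact Function.update_of_ne (Finset.ne_of_mem_erase (Finset.mem_val.mp hx)) _ _


/-- on the positive orthant, for `l < k ≤ n`, the partial derivative of
`σₖ/σₗ` in each variable `λᵢ` is positive; in particular `σₖ/σₗ` is strictly
increasing in each variable there. -/

theorem esymm_quotient_monotone (n k l : ℕ) (hl : l < k) (hk : k ≤ n)
    (lam : Fin n → ℝ) (hlam : ∀ i, 0 < lam i) (i : Fin n) :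
    0 < deriv (fun t : ℝ =>
        esymm n k (Function.update lam i t) / esymm n l (Function.update lam i t))
      (lam i) := by
  obtain ⟨k', rfl⟩ : ∃ k', k = k' + 1 := ⟨k - 1, by omega⟩
  set M := (Finset.univ.erase i).val.map lam with hM
  have hMpos : ∀ x ∈ M, 0 < x := by
    intro x hx
    rw [hM, Multiset.mem_map] at hx
    obtain ⟨j, _, rfl⟩ := hx
    exact hlam j
  have hMcard : Multiset.card M = n - 1 := by
    rw [hM, Multiset.card_map, ← Finset.card_def, Finset.card_erase_of_mem (Finset.mem_univ i),
      Finset.card_univ, Fintype.card_fin]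
  have hMnn : ∀ j, 0 ≤ M.esymm j := fun j => myEsymm_nonneg M (fun y hy => (hMpos y hy).le) j
  have hdec : ∀ (j : ℕ) (t : ℝ), esymm n (j + 1) (Function.update lam i t)
      = M.esymm (j + 1) + t * M.esymm j := by
    intro j t
    rw [esymm_eq_multiset, update_map, myEsymm_cons, ← hM]
  have hnum : HasDerivAt (fun t : ℝ => M.esymm (k' + 1) + t * M.esymm k')
      (M.esymm k') (lam i) := by
    simpa using ((hasDerivAt_id (lam i)).mul_const (M.esymm k')).const_add (M.esymm (k' + 1))
  cases l with
  | zero =>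
    have h0 : ∀ t : ℝ, esymm n 0 (Function.update lam i t) = 1 := by
      intro t
      rw [esymm_eq_multiset, update_map, myEsymm_zero]
    have hfun : (fun t : ℝ => esymm n (k' + 1) (Function.update lam i t)
          / esymm n 0 (Function.update lam i t))
        = fun t : ℝ => M.esymm (k' + 1) + t * M.esymm k' := by
      funext t
      rw [h0, hdec, div_one]
    rw [hfun, hnum.deriv]
    exact myEsymm_pos M hMpos (by rw [hMcard]; omega)
  | succ l' =>
    have hden : HasDerivAt (fun t : ℝ => M.esymm (l' + 1) + t * M.esymm l')
        (M.esymm l') (lam i) := by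
      simpa using ((hasDerivAt_id (lam i)).mul_const (M.esymm l')).const_add (M.esymm (l' + 1))
    have hdpos : 0 < M.esymm (l' + 1) + lam i * M.esymm l' := by
      have h1 : 0 < M.esymm (l' + 1) := myEsymm_pos M hMpos (by rw [hMcard]; omega)
      have h2 : 0 ≤ lam i * M.esymm l' := mul_nonneg (hlam i).le (hMnn l')
      linarith
    have hq := hnum.div hden hdpos.ne'
    have hfun : (fun t : ℝ => esymm n (k' + 1) (Function.update lam i t)
          / esymm n (l' + 1) (Function.update lam i t))
        = fun t : ℝ => (M.esymm (k' + 1) + t * M.esymm k')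
          / (M.esymm (l' + 1) + t * M.esymm l') := by
      funext t
      rw [hdec, hdec]
    rw [hfun, HasDerivAt.deriv (f := fun t : ℝ => (M.esymm (k' + 1) + t * M.esymm k')
      / (M.esymm (l' + 1) + t * M.esymm l')) hq]
    have hN := (newton_aux M hMpos k' l' (by omega)).2 (by omega) (by rw [hMcard]; omega)
    apply div_pos
    · nlinarith [hN]
    · exact pow_pos hdpos 2
end
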